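/- arXiv:2503.17256 — 5 statements merged into one kernel-verified Lean document; each statement's English description precedes it below -/
import Mathlib

section
/- The number of classical parking functions with m cars and n spots, where 1 ≤ m ≤ n, equals (n+1-m)·(n+1)^(m-1). -/
section Circ

open scoped Classical in
/-- Circular parking try: park at first free spot `a + j` (cyclically). -/
noncomputable def cTry {N : ℕ} (occ : Finset (ZMod N)) (a : ZMod N) : ZMod N :=
  if h : ∃ j : ℕ, a + (j : ZMod N) ∉ occ then a + ((Nat.find h : ℕ) : ZMod N) else a

noncomputable def cRun {N : ℕ} : List (ZMod N) → Finset (ZMod N) → Finset (ZMod N)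
  | [], occ => occ
  | a :: rest, occ => cRun rest (insert (cTry occ a) occ)

lemma find_congr' {p q : ℕ → Prop} [DecidablePred p] [DecidablePred q]
    (hp : ∃ n, p n) (hq : ∃ n, q n) (h : ∀ n, p n ↔ q n) : Nat.find hp = Nat.find hq :=
  le_antisymm (Nat.find_le ((h _).2 (Nat.find_spec hq))) (Nat.find_le ((h _).1 (Nat.find_spec hp)))

lemma cTry_exists {N : ℕ} [NeZero N] {occ : Finset (ZMod N)} (h : occ ≠ Finset.univ)
    (a : ZMod N) : ∃ j : ℕ, a + (j : ZMod N) ∉ occ := by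
  obtain ⟨s, hs⟩ : ∃ s, s ∉ occ := by
    by_contra hc
    push_neg at hc
    exact h (Finset.eq_univ_iff_forall.2 hc)
  refine ⟨(s - a).val, ?_⟩
  rw [ZMod.natCast_zmod_val]
  have : a + (s - a) = s := by ring
  rwa [this]

lemma cTry_not_mem {N : ℕ} [NeZero N] {occ : Finset (ZMod N)} (h : occ ≠ Finset.univ)
    (a : ZMod N) : cTry occ a ∉ occ := by
  classical
  have he := cTry_exists h a
  rw [cTry, dif_pos he]
  exact Nat.find_spec he

lemma cTry_of_not_mem {N : ℕ} {occ : Finset (ZMod N)} {a : ZMod N} (h : a ∉ occ) :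
    cTry occ a = a := by
  classical
  have he : ∃ j : ℕ, a + (j : ZMod N) ∉ occ := ⟨0, by simpa using h⟩
  rw [cTry, dif_pos he]
  have : Nat.find he = 0 := by
    rw [Nat.find_eq_zero]
    simpa using h
  simp [this]

lemma cRun_mono {N : ℕ} (prefs : List (ZMod N)) (occ : Finset (ZMod N)) :
    occ ⊆ cRun prefs occ := by
  induction prefs generalizing occ with
  | nil => exact Finset.Subset.refl _
  | cons a rest ih =>
      exact Finset.Subset.trans (Finset.subset_insert _ _) (ih _)

lemma cRun_card {N : ℕ} [NeZero N] (prefs : List (ZMod N)) (occ : Finset (ZMod N))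
    (h : occ.card + prefs.length ≤ N) : (cRun prefs occ).card = occ.card + prefs.length := by
  induction prefs generalizing occ with
  | nil => simp [cRun]
  | cons a rest ih =>
      have hcard : occ.card < N := by simp at h; omega
      have hne : occ ≠ Finset.univ := by
        intro hc
        rw [hc, Finset.card_univ, ZMod.card] at hcard
        omega
      have hnm := cTry_not_mem hne a
      have h1 : (insert (cTry occ a) occ).card = occ.card + 1 := Finset.card_insert_of_notMem hnm
      rw [cRun, ih]
      · rw [h1]; simp; omega
      · rw [h1]; simp at h ⊢; omega

lemma mem_image_add {N : ℕ} (occ : Finset (ZMod N)) (x c : ZMod N) :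
    x + c ∈ occ.image (· + c) ↔ x ∈ occ := by
  constructor
  · rintro h
    rw [Finset.mem_image] at h
    obtain ⟨y, hy, hyc⟩ := h
    have : y = x := by
      have := add_right_cancel hyc
      exact this
    rwa [← this]
  · intro h
    exact Finset.mem_image_of_mem _ h

lemma cTry_shift {N : ℕ} (occ : Finset (ZMod N)) (a c : ZMod N) :
    cTry (occ.image (· + c)) (a + c) = cTry occ a + c := by
  classical
  have key : ∀ j : ℕ, (a + c + (j : ZMod N) ∉ occ.image (· + c)) ↔ (a + (j : ZMod N) ∉ occ) := by
    intro j
    have : a + c + (j : ZMod N) = (a + (j : ZMod N)) + c := by ring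
    rw [this, mem_image_add]
  by_cases h : ∃ j : ℕ, a + (j : ZMod N) ∉ occ
  · have h' : ∃ j : ℕ, a + c + (j : ZMod N) ∉ occ.image (· + c) := by
      obtain ⟨j, hj⟩ := h; exact ⟨j, (key j).2 hj⟩
    rw [cTry, cTry, dif_pos h, dif_pos h']
    rw [find_congr' h' h key]
    ring
  · have h' : ¬ ∃ j : ℕ, a + c + (j : ZMod N) ∉ occ.image (· + c) := by
      intro hc; obtain ⟨j, hj⟩ := hc; exact h ⟨j, (key j).1 hj⟩
    rw [cTry, cTry, dif_neg h, dif_neg h']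

lemma cRun_shift {N : ℕ} (prefs : List (ZMod N)) (occ : Finset (ZMod N)) (c : ZMod N) :
    cRun (prefs.map (· + c)) (occ.image (· + c)) = (cRun prefs occ).image (· + c) := by
  induction prefs generalizing occ with
  | nil => simp [cRun]
  | cons a rest ih =>
      rw [List.map_cons, cRun, cRun, cTry_shift,
        show insert (cTry occ a + c) (occ.image (· + c))
            = (insert (cTry occ a) occ).image (· + c) by simp [Finset.image_insert], ih]

lemma cRun_mem_of_pref {N : ℕ} {a : ZMod N} {prefs : List (ZMod N)} (ha : a ∈ prefs)
    (occ : Finset (ZMod N)) : a ∈ cRun prefs occ := by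
  induction prefs generalizing occ with
  | nil => simp at ha
  | cons b rest ih =>
      rw [List.mem_cons] at ha
      rcases ha with rfl | ha
      · by_cases hb : a ∈ occ
        · rw [cRun]
          exact cRun_mono rest _ (Finset.mem_insert_of_mem hb)
        · rw [cRun, cTry_of_not_mem hb]
          exact cRun_mono rest _ (Finset.mem_insert_self _ _)
      · exact ih ha _

end Circ

section Find
lemma find?_range'_some {p : ℕ → Bool} : ∀ {len a s : ℕ},
    (List.range' a len).find? p = some s →
    a ≤ s ∧ s < a + len ∧ p s = true ∧ ∀ t, a ≤ t → t < s → p t = false := by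
  intro len
  induction len with
  | zero => intro a s h; simp at h
  | succ k ih =>
      intro a s h
      rw [List.range'_succ] at h
      by_cases hpa : p a
      · rw [List.find?_cons_of_pos hpa] at h
        obtain rfl : a = s := by simpa using h
        exact ⟨le_refl _, by omega, hpa, fun t h1 h2 => by omega⟩
      · rw [List.find?_cons_of_neg hpa] at h
        obtain ⟨h1, h2, h3, h4⟩ := ih h
        refine ⟨by omega, by omega, h3, fun t ht1 ht2 => ?_⟩
        rcases Nat.eq_or_lt_of_le ht1 with rfl | ht1'
        · simpa using hpa
        · exact h4 t ht1' ht2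

lemma find?_range'_none {p : ℕ → Bool} {len a : ℕ}
    (h : (List.range' a len).find? p = none) :
    ∀ t, a ≤ t → t < a + len → p t = false := by
  rw [List.find?_eq_none] at h
  intro t h1 h2
  simpa using h t (by simp; omega)
end Find

/-- Try to park a car with preference `a` under the `(k,l)`-pullback rule on a
street with spots `1,…,n`, where `occ` is the set of occupied spots.  The car
parks at `a` if it is free; otherwise it checks `a-1,…,a-k` (not before spot 1)
and parks in the first free spot found; failing that it checks `a+1,…,a+l`
(not beyond spot `n`).  Returns the spot where the car parks, if any. -/
def pullTry (k l n : ℕ) (occ : Finset ℕ) (a : ℕ) : Option ℕ :=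
  if a ∉ occ then some a
  else
    match ((List.range k).map (fun j => a - (j + 1))).find?
        (fun s => decide (1 ≤ s ∧ s ∉ occ)) with
    | some s => some s
    | none =>
        ((List.range l).map (fun j => a + (j + 1))).find?
          (fun s => decide (s ≤ n ∧ s ∉ occ))

/-- Park a list of cars sequentially by the `(k,l)`-pullback rule, returning the
list of spots where they park (in order) if all of them park. -/
def pullRunAux (k l n : ℕ) : List ℕ → Finset ℕ → Option (List ℕ)
  | [], _ => some []
  | a :: rest, occ =>
    match pullTry k l n occ a with
    | none => none
    | some s => (pullRunAux k l n rest (insert s occ)).map (fun t => s :: t)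

def pullRun (k l n : ℕ) (prefs : List ℕ) : Option (List ℕ) :=
  pullRunAux k l n prefs ∅

/-- The `k`-Naples rule: back up at most `k` spots, then drive forward all the
way to spot `n`. -/
def naplesTry (k n : ℕ) (occ : Finset ℕ) (a : ℕ) : Option ℕ :=
  if a ∉ occ then some a
  else
    match ((List.range k).map (fun j => a - (j + 1))).find?
        (fun s => decide (1 ≤ s ∧ s ∉ occ)) with
    | some s => some s
    | none => (List.range' (a + 1) (n - a)).find? (fun s => decide (s ∉ occ))

def naplesRunAux (k n : ℕ) : List ℕ → Finset ℕ → Option (List ℕ)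
  | [], _ => some []
  | a :: rest, occ =>
    match naplesTry k n occ a with
    | none => none
    | some s => (naplesRunAux k n rest (insert s occ)).map (fun t => s :: t)

def naplesRun (k n : ℕ) (prefs : List ℕ) : Option (List ℕ) :=
  naplesRunAux k n prefs ∅

/-- The classical rule: park in the first free spot among `a, a+1, …, n`. -/
def classicalTry (n : ℕ) (occ : Finset ℕ) (a : ℕ) : Option ℕ :=
  (List.range' a (n + 1 - a)).find? (fun s => decide (s ∉ occ))

def classicalRunAux (n : ℕ) : List ℕ → Finset ℕ → Option (List ℕ)
  | [], _ => some []
  | a :: rest, occ =>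
    match classicalTry n occ a with
    | none => none
    | some s => (classicalRunAux n rest (insert s occ)).map (fun t => s :: t)

def classicalRun (n : ℕ) (prefs : List ℕ) : Option (List ℕ) :=
  classicalRunAux n prefs ∅

/-- The list of (1-based) preferences encoded by a tuple `α ∈ [n]^m`. -/
def prefList {m n : ℕ} (α : Fin m → Fin n) : List ℕ :=
  List.ofFn (fun i => (α i : ℕ) + 1)

/-- The finset of `(k,l)`-pullback `(m,n)`-parking functions. -/
def pullPFs (k l m n : ℕ) : Finset (Fin m → Fin n) :=
  Finset.univ.filter (fun α => (pullRun k l n (prefList α)).isSome = true)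

/-- The finset of `k`-Naples `(m,n)`-parking functions. -/
def naplesPFs (k m n : ℕ) : Finset (Fin m → Fin n) :=
  Finset.univ.filter (fun α => (naplesRun k n (prefList α)).isSome = true)

/-- The finset of classical `(m,n)`-parking functions. -/
def classicalPFs (m n : ℕ) : Finset (Fin m → Fin n) :=
  Finset.univ.filter (fun α => (classicalRun n (prefList α)).isSome = true)


section Corr
variable {n : ℕ}

lemma mem_image_cast {occ : Finset ℕ} (hocc : occ ⊆ Finset.Icc 1 n) {s : ℕ} (hs : s ≤ n) :
    ((s : ZMod (n+1)) ∈ occ.image (fun t : ℕ => (t : ZMod (n+1)))) ↔ s ∈ occ := by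
  constructor
  · rw [Finset.mem_image]
    rintro ⟨t, ht, hts⟩
    have ht' := hocc ht
    simp only [Finset.mem_Icc] at ht'
    have : t = s := by
      have h1 : ((t : ZMod (n+1))).val = t := ZMod.val_cast_of_lt (by omega)
      have h2 : ((s : ZMod (n+1))).val = s := ZMod.val_cast_of_lt (by omega)
      rw [← h1, ← h2, hts]
    rwa [← this]
  · exact fun h => Finset.mem_image_of_mem _ h

lemma zero_not_mem_image {occ : Finset ℕ} (hocc : occ ⊆ Finset.Icc 1 n) :
    (0 : ZMod (n+1)) ∉ occ.image (fun t : ℕ => (t : ZMod (n+1))) := by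
  intro h
  rw [show (0 : ZMod (n+1)) = ((0 : ℕ) : ZMod (n+1)) by simp] at h
  have h0 := (mem_image_cast hocc (Nat.zero_le n)).1 h
  have := hocc h0
  simp at this

lemma corr : ∀ (prefs : List ℕ) (occ : Finset ℕ),
    occ ⊆ Finset.Icc 1 n → (∀ a ∈ prefs, 1 ≤ a ∧ a ≤ n) →
    ((classicalRunAux n prefs occ).isSome ↔
      (0 : ZMod (n+1)) ∉ cRun (prefs.map (fun a : ℕ => (a : ZMod (n+1))))
        (occ.image (fun t : ℕ => (t : ZMod (n+1))))) := by
  intro prefs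
  induction prefs with
  | nil =>
      intro occ hocc _
      simp only [classicalRunAux, List.map_nil, cRun, Option.isSome_some]
      simpa using zero_not_mem_image hocc
  | cons a rest ih =>
      intro occ hocc hpref
      obtain ⟨ha1, ha2⟩ := hpref a List.mem_cons_self
      have h0im := zero_not_mem_image hocc
      cases h : classicalTry n occ a with
      | none =>
          -- all spots a..n are occupied; circular car parks at 0
          have hall : ∀ t, a ≤ t → t ≤ n → t ∈ occ := by
            intro t h1 h2
            have := find?_range'_none (p := fun s => decide (s ∉ occ)) h t h1 (by omega)
            simpa using this
          have hex : ∃ j : ℕ, (a : ZMod (n+1)) + (j : ZMod (n+1)) ∉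
              occ.image (fun t : ℕ => (t : ZMod (n+1))) := by
            refine ⟨n + 1 - a, ?_⟩
            rw [show ((a : ZMod (n+1)) + ((n + 1 - a : ℕ) : ZMod (n+1)))
                = ((n + 1 : ℕ) : ZMod (n+1)) by push_cast [Nat.cast_sub (by omega : a ≤ n+1)]; ring]
            simpa using h0im
          have hfind : Nat.find hex = n + 1 - a := by
            rw [Nat.find_eq_iff]
            constructor
            · rw [show ((a : ZMod (n+1)) + ((n + 1 - a : ℕ) : ZMod (n+1)))
                  = ((n + 1 : ℕ) : ZMod (n+1)) by push_cast [Nat.cast_sub (by omega : a ≤ n+1)]; ring]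
              simpa using h0im
            · intro j hj
              simp only [not_not]
              rw [show ((a : ZMod (n+1)) + (j : ZMod (n+1))) = ((a + j : ℕ) : ZMod (n+1)) by push_cast; ring]
              exact (mem_image_cast hocc (by omega)).2 (hall (a + j) (by omega) (by omega))
          have hctry : cTry (occ.image (fun t : ℕ => (t : ZMod (n+1)))) (a : ZMod (n+1)) = 0 := by
            classical
            rw [cTry, dif_pos hex, hfind]
            rw [show ((a : ZMod (n+1)) + ((n + 1 - a : ℕ) : ZMod (n+1)))
                = ((n + 1 : ℕ) : ZMod (n+1)) by push_cast [Nat.cast_sub (by omega : a ≤ n+1)]; ring]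
            simp
          have hmem : (0 : ZMod (n+1)) ∈ cRun ((a :: rest).map (fun a : ℕ => (a : ZMod (n+1))))
              (occ.image (fun t : ℕ => (t : ZMod (n+1)))) := by
            rw [List.map_cons, cRun, hctry]
            exact cRun_mono _ _ (Finset.mem_insert_self _ _)
          simp only [classicalRunAux, h]
          simpa using hmem
      | some s =>
          obtain ⟨hs1, hs2, hs3, hs4⟩ := find?_range'_some h
          have hsn : s ≤ n := by omega
          have hsocc : s ∉ occ := by simpa using hs3
          have hbefore : ∀ t, a ≤ t → t < s → t ∈ occ := by
            intro t h1 h2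
            have := hs4 t h1 h2
            simpa using this
          have hex : ∃ j : ℕ, (a : ZMod (n+1)) + (j : ZMod (n+1)) ∉
              occ.image (fun t : ℕ => (t : ZMod (n+1))) := by
            refine ⟨s - a, ?_⟩
            rw [show ((a : ZMod (n+1)) + ((s - a : ℕ) : ZMod (n+1))) = ((s : ℕ) : ZMod (n+1)) by
              push_cast [Nat.cast_sub hs1]; ring]
            rw [mem_image_cast hocc hsn]
            exact hsocc
          have hfind : Nat.find hex = s - a := by
            rw [Nat.find_eq_iff]
            constructor
            · rw [show ((a : ZMod (n+1)) + ((s - a : ℕ) : ZMod (n+1))) = ((s : ℕ) : ZMod (n+1)) by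
                push_cast [Nat.cast_sub hs1]; ring]
              rw [mem_image_cast hocc hsn]
              exact hsocc
            · intro j hj
              simp only [not_not]
              rw [show ((a : ZMod (n+1)) + (j : ZMod (n+1))) = ((a + j : ℕ) : ZMod (n+1)) by push_cast; ring]
              exact (mem_image_cast hocc (by omega)).2 (hbefore (a + j) (by omega) (by omega))
          have hctry : cTry (occ.image (fun t : ℕ => (t : ZMod (n+1)))) (a : ZMod (n+1))
              = ((s : ℕ) : ZMod (n+1)) := by
            classical
            rw [cTry, dif_pos hex, hfind]
            push_cast [Nat.cast_sub hs1]; ring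
          have himg : insert ((s : ℕ) : ZMod (n+1)) (occ.image (fun t : ℕ => (t : ZMod (n+1))))
              = (insert s occ).image (fun t : ℕ => (t : ZMod (n+1))) := by
            simp [Finset.image_insert]
          have hsub : insert s occ ⊆ Finset.Icc 1 n := by
            intro t ht
            rcases Finset.mem_insert.1 ht with rfl | ht
            · simp [Finset.mem_Icc]; omega
            · exact hocc ht
          have := ih (insert s occ) hsub (fun b hb => hpref b (List.mem_cons_of_mem _ hb))
          simp only [classicalRunAux, h, List.map_cons, cRun, hctry, himg]
          simpa using this

end Corr

section Count
variable {N m : ℕ}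

lemma key_shift [NeZero N] (c : ZMod N) (β : Fin m → ZMod N) :
    (c ∈ cRun (List.ofFn (fun k => β k + c)) ∅) ↔ (0 ∈ cRun (List.ofFn β) ∅) := by
  have h1 : List.ofFn (fun k => β k + c) = (List.ofFn β).map (· + c) := by
    rw [List.map_ofFn]; rfl
  have h2 : cRun ((List.ofFn β).map (· + c)) (∅ : Finset (ZMod N))
      = (cRun (List.ofFn β) ∅).image (· + c) := by
    have := cRun_shift (List.ofFn β) ∅ c
    simpa using this
  rw [h1, h2]
  simpa using mem_image_add (cRun (List.ofFn β) ∅) 0 c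

lemma countA (N m : ℕ) [NeZero N] (hm : m ≤ N) (hm1 : 1 ≤ m) :
    (Finset.univ.filter
      (fun β : Fin m → ZMod N => (0 : ZMod N) ∉ cRun (List.ofFn β) ∅)).card
      = (N - m) * N ^ (m - 1) := by
  classical
  set A : ZMod N → Finset (Fin m → ZMod N) :=
    fun c => Finset.univ.filter (fun β => c ∉ cRun (List.ofFn β) ∅) with hA
  have hRcard : ∀ β : Fin m → ZMod N, (cRun (List.ofFn β) ∅).card = m := by
    intro β
    have := cRun_card (List.ofFn β) ∅ (by simpa using hm)
    simpa using this
  have hAcard : ∀ c, (A c).card = (A 0).card := by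
    intro c
    refine Finset.card_bij' (fun β _ => fun k => β k - c) (fun β _ => fun k => β k + c)
      ?_ ?_ ?_ ?_
    · intro β hβ
      simp only [hA, Finset.mem_filter, Finset.mem_univ, true_and] at hβ ⊢
      intro h0
      apply hβ
      have : (fun k => (β k - c) + c) = β := by funext k; ring
      exact (this ▸ (key_shift c (fun k => β k - c))).2 h0
    · intro β hβ
      simp only [hA, Finset.mem_filter, Finset.mem_univ, true_and] at hβ ⊢
      intro hc
      exact hβ ((key_shift c β).1 hc)
    · intro β _; funext k; ring
    · intro β _; funext k; ring
  have hsum : ∑ c : ZMod N, (A c).card = (N - m) * N ^ m := by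
    have h1 : ∀ c, (A c).card = ∑ β : Fin m → ZMod N,
        (if c ∉ cRun (List.ofFn β) ∅ then 1 else 0) := by
      intro c; rw [hA]; exact Finset.card_filter _ _
    rw [Finset.sum_congr rfl (fun c _ => h1 c), Finset.sum_comm]
    have h2 : ∀ β : Fin m → ZMod N,
        (∑ c : ZMod N, if c ∉ cRun (List.ofFn β) ∅ then 1 else 0) = N - m := by
      intro β
      rw [← Finset.card_filter]
      have : Finset.univ.filter (fun c : ZMod N => c ∉ cRun (List.ofFn β) ∅)
          = (cRun (List.ofFn β) ∅)ᶜ := by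
        ext c; simp [Finset.mem_compl]
      rw [this, Finset.card_compl, hRcard β, ZMod.card]
    rw [Finset.sum_congr rfl (fun β _ => h2 β), Finset.sum_const, Finset.card_univ]
    simp [ZMod.card, mul_comm]
  have hleft : ∑ c : ZMod N, (A c).card = (A 0).card * N := by
    rw [Finset.sum_congr rfl (fun c _ => hAcard c), Finset.sum_const, Finset.card_univ,
      ZMod.card, smul_eq_mul, mul_comm]
  have hNpos : 0 < N := Nat.pos_of_ne_zero (NeZero.ne N)
  have hpow : N ^ m = N ^ (m - 1) * N := by
    rw [← pow_succ]
    congr 1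
    omega
  have : (A 0).card * N = ((N - m) * N ^ (m - 1)) * N := by
    rw [← hleft, hsum, hpow]; ring
  exact Nat.eq_of_mul_eq_mul_right hNpos this

end Count

theorem stmt0 (m n : ℕ) (h1 : 1 ≤ m) (h2 : m ≤ n) :
    (classicalPFs m n).card = (n + 1 - m) * (n + 1) ^ (m - 1) := by
  classical
  have hcorr : ∀ α : Fin m → Fin n, ((classicalRun n (prefList α)).isSome ↔
      (0 : ZMod (n+1)) ∉ cRun (List.ofFn (fun k => (((α k : ℕ) + 1 : ℕ) : ZMod (n+1)))) ∅) := by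
    intro α
    have hp : ∀ a ∈ prefList α, 1 ≤ a ∧ a ≤ n := by
      intro a ha
      rw [prefList, List.mem_ofFn] at ha
      obtain ⟨i, rfl⟩ := ha
      have := (α i).isLt
      show 1 ≤ (α i : ℕ) + 1 ∧ (α i : ℕ) + 1 ≤ n
      omega
    have hc := corr (prefList α) ∅ (by simp) hp
    have hmap : (prefList α).map (fun a : ℕ => (a : ZMod (n+1)))
        = List.ofFn (fun k => (((α k : ℕ) + 1 : ℕ) : ZMod (n+1))) := by
      rw [prefList, List.map_ofFn]; rfl
    rw [classicalRun, hc, hmap]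
    simp
  rw [show classicalPFs m n
      = Finset.univ.filter (fun α => (classicalRun n (prefList α)).isSome = true) from rfl]
  have hbij : (Finset.univ.filter
        (fun α : Fin m → Fin n => (classicalRun n (prefList α)).isSome = true)).card
      = (Finset.univ.filter
        (fun β : Fin m → ZMod (n+1) => (0 : ZMod (n+1)) ∉ cRun (List.ofFn β) ∅)).card := by
    refine Finset.card_bij
      (fun α _ => fun k => (((α k : ℕ) + 1 : ℕ) : ZMod (n+1))) ?_ ?_ ?_
    · intro α hα
      simp only [Finset.mem_filter, Finset.mem_univ, true_and] at hα ⊢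
      exact (hcorr α).1 hα
    · intro α₁ h₁ α₂ h₂ heq
      funext k
      have hk : ((((α₁ k : ℕ) + 1 : ℕ)) : ZMod (n+1)) = ((((α₂ k : ℕ) + 1 : ℕ)) : ZMod (n+1)) :=
        congrFun heq k
      have hv1 : (((((α₁ k : ℕ) + 1 : ℕ)) : ZMod (n+1))).val = (α₁ k : ℕ) + 1 :=
        ZMod.val_cast_of_lt (by have := (α₁ k).isLt; omega)
      have hv2 : (((((α₂ k : ℕ) + 1 : ℕ)) : ZMod (n+1))).val = (α₂ k : ℕ) + 1 :=
        ZMod.val_cast_of_lt (by have := (α₂ k).isLt; omega)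
      have : (α₁ k : ℕ) + 1 = (α₂ k : ℕ) + 1 := by
        rw [← hv1, ← hv2, hk]
      exact Fin.ext (by omega)
    · intro b hb
      simp only [Finset.mem_filter, Finset.mem_univ, true_and] at hb
      have hval : ∀ k, 1 ≤ (b k).val ∧ (b k).val < n + 1 := by
        intro k
        refine ⟨?_, ZMod.val_lt (b k)⟩
        have hbk : b k ≠ 0 := by
          intro h0
          apply hb
          rw [← h0]
          exact cRun_mem_of_pref (by rw [List.mem_ofFn]; exact ⟨k, rfl⟩) ∅
        have : (b k).val ≠ 0 := by
          intro hv
          exact hbk ((ZMod.val_eq_zero _).1 hv)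
        omega
      set α : Fin m → Fin n := fun k => ⟨(b k).val - 1, by have := hval k; omega⟩ with hαdef
      have heq : (fun k => ((((α k : ℕ) + 1 : ℕ)) : ZMod (n+1))) = b := by
        funext k
        show (((((b k).val - 1 : ℕ) + 1 : ℕ)) : ZMod (n+1)) = b k
        rw [show (b k).val - 1 + 1 = (b k).val by have := hval k; omega,
          ZMod.natCast_zmod_val]
      refine ⟨α, ?_, heq⟩
      simp only [Finset.mem_filter, Finset.mem_univ, true_and]
      refine (hcorr α).2 ?_
      rw [show (List.ofFn fun k => ((((α k : ℕ) + 1 : ℕ)) : ZMod (n+1))) = List.ofFn b by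
        rw [heq]]
      exact hb
  rw [hbij, countA (n+1) m (by omega) h1]
end

section
/- For n ≥ 1, the number of classical parking functions with n cars and n spots equals (n+1)^(n-1). -/
namespace ParkAux



/-- Circular parking: the car checks `a, a+1, …` around the circle `ZMod m`. -/
def cTry (m : ℕ) (occ : Finset (ZMod m)) (a : ZMod m) : Option (ZMod m) :=
  ((List.range m).map (fun j : ℕ => (a + (j : ZMod m) : ZMod m))).find? (fun s => decide (s ∉ occ))

def cStep (m : ℕ) (occ : Finset (ZMod m)) (a : ZMod m) : Finset (ZMod m) :=
  match cTry m occ a with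
  | some s => insert s occ
  | none => occ

def cRun (m : ℕ) (L : List (ZMod m)) (occ : Finset (ZMod m)) : Finset (ZMod m) :=
  L.foldl (cStep m) occ

lemma cRun_nil (m : ℕ) (occ : Finset (ZMod m)) : cRun m [] occ = occ := rfl

lemma cRun_cons (m : ℕ) (a : ZMod m) (L : List (ZMod m)) (occ : Finset (ZMod m)) :
    cRun m (a :: L) occ = cRun m L (cStep m occ a) := rfl

lemma find?_congr' {α : Type*} {l : List α} {p q : α → Bool} (h : ∀ x ∈ l, p x = q x) :
    l.find? p = l.find? q := by
  induction l with
  | nil => rfl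
  | cons a t ih =>
    rw [List.find?_cons, List.find?_cons, h a List.mem_cons_self]
    cases q a
    · exact ih fun x hx => h x (List.mem_cons_of_mem _ hx)
    · rfl

lemma cTry_not_mem {m : ℕ} {occ : Finset (ZMod m)} {a s : ZMod m}
    (h : cTry m occ a = some s) : s ∉ occ := by
  have := List.find?_some h
  simpa using this

lemma cTry_some_of_card {m : ℕ} [NeZero m] {occ : Finset (ZMod m)} (h : occ.card < m)
    (a : ZMod m) : ∃ s, cTry m occ a = some s := by
  have hc : (occᶜ : Finset (ZMod m)).Nonempty := by
    apply Finset.card_pos.mp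
    rw [Finset.card_compl]
    simp only [ZMod.card]
    omega
  obtain ⟨t, ht⟩ := hc
  rw [Finset.mem_compl] at ht
  have hmem : ∃ x ∈ (List.range m).map (fun j : ℕ => (a + (j : ZMod m) : ZMod m)),
      (fun s => decide (s ∉ occ)) x = true := by
    refine ⟨t, ?_, by simpa using ht⟩
    apply List.mem_map.mpr
    refine ⟨(t - a).val, List.mem_range.mpr (ZMod.val_lt _), ?_⟩
    rw [ZMod.natCast_rightInverse (t - a)]
    ring
  have := List.find?_isSome.mpr hmem
  exact Option.isSome_iff_exists.mp (by simpa [cTry] using this)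

lemma subset_cStep (m : ℕ) (occ : Finset (ZMod m)) (a : ZMod m) : occ ⊆ cStep m occ a := by
  unfold cStep
  cases cTry m occ a with
  | none => exact Finset.Subset.rfl
  | some s => exact Finset.subset_insert _ _

lemma subset_cRun (m : ℕ) (L : List (ZMod m)) (occ : Finset (ZMod m)) : occ ⊆ cRun m L occ := by
  induction L generalizing occ with
  | nil => exact Finset.Subset.rfl
  | cons a L ih => exact (subset_cStep m occ a).trans (ih _)

lemma cStep_card {m : ℕ} [NeZero m] {occ : Finset (ZMod m)} (h : occ.card < m) (a : ZMod m) :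
    (cStep m occ a).card = occ.card + 1 := by
  obtain ⟨s, hs⟩ := cTry_some_of_card h a
  unfold cStep
  rw [hs]
  exact Finset.card_insert_of_notMem (cTry_not_mem hs)

lemma cRun_card {m : ℕ} [NeZero m] (L : List (ZMod m)) (occ : Finset (ZMod m))
    (h : occ.card + L.length ≤ m) : (cRun m L occ).card = occ.card + L.length := by
  induction L generalizing occ with
  | nil => simp [cRun_nil]
  | cons a L ih =>
    rw [cRun_cons]
    have hlt : occ.card < m := by simp at h; omega
    rw [ih _ (by rw [cStep_card hlt]; simp at h ⊢; omega), cStep_card hlt]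
    simp; omega

lemma mem_image_add_right {m : ℕ} {occ : Finset (ZMod m)} {x c : ZMod m} :
    x + c ∈ occ.image (· + c) ↔ x ∈ occ := by
  constructor
  · intro hx
    obtain ⟨y, hy, hxy⟩ := Finset.mem_image.mp hx
    rwa [add_right_cancel hxy] at hy
  · intro hx
    exact Finset.mem_image.mpr ⟨x, hx, rfl⟩

lemma cTry_shift {m : ℕ} (occ : Finset (ZMod m)) (a c : ZMod m) :
    cTry m (occ.image (· + c)) (a + c) = (cTry m occ a).map (· + c) := by
  unfold cTry
  have h1 : (List.range m).map (fun j : ℕ => (a + c + (j : ZMod m) : ZMod m))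
      = ((List.range m).map (fun j : ℕ => (a + (j : ZMod m) : ZMod m))).map (· + c) := by
    rw [List.map_map]
    congr 1
    funext j
    simp [add_right_comm]
  rw [h1, List.find?_map]
  have h2 : ((fun s => decide (s ∉ occ.image (· + c))) ∘ (· + c))
      = (fun s => decide (s ∉ occ)) := by
    funext x
    simp only [Function.comp_apply]
    exact decide_eq_decide.mpr (by rw [mem_image_add_right])
  rw [h2]

lemma cStep_shift {m : ℕ} (occ : Finset (ZMod m)) (a c : ZMod m) :
    cStep m (occ.image (· + c)) (a + c) = (cStep m occ a).image (· + c) := by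
  unfold cStep
  rw [cTry_shift]
  cases cTry m occ a with
  | none => rfl
  | some s => simp [Finset.image_insert]

lemma cRun_shift {m : ℕ} (L : List (ZMod m)) (occ : Finset (ZMod m)) (c : ZMod m) :
    cRun m (L.map (· + c)) (occ.image (· + c)) = (cRun m L occ).image (· + c) := by
  induction L generalizing occ with
  | nil => rfl
  | cons a L ih =>
    rw [List.map_cons, cRun_cons, cRun_cons, cStep_shift, ih]

lemma cTry_self {m : ℕ} [NeZero m] {occ : Finset (ZMod m)} {a : ZMod m} (h : a ∉ occ) :
    cTry m occ a = some a := by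
  unfold cTry
  obtain ⟨k, rfl⟩ := Nat.exists_eq_succ_of_ne_zero (NeZero.ne m)
  rw [List.range_succ_eq_map, List.map_cons, List.find?_cons]
  simp [h]

lemma zero_mem_cRun {m : ℕ} [NeZero m] (L : List (ZMod m)) (occ : Finset (ZMod m))
    (h : (0 : ZMod m) ∈ L ∨ (0 : ZMod m) ∈ occ) : (0 : ZMod m) ∈ cRun m L occ := by
  induction L generalizing occ with
  | nil => simpa [cRun_nil] using h.resolve_left (by simp)
  | cons a L ih =>
    rw [cRun_cons]
    by_cases h0 : (0 : ZMod m) ∈ occ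
    · exact ih _ (Or.inr (subset_cStep m occ a h0))
    · rcases h with h | h
      · rcases List.mem_cons.mp h with h | h
        · subst h
          refine ih _ (Or.inr ?_)
          unfold cStep
          rw [cTry_self h0]
          exact Finset.mem_insert_self _ _
        · exact ih _ (Or.inl h)
      · exact absurd h h0


/-! ### Counting: fibers of the empty spot -/

def OccF {n : ℕ} (β : Fin n → ZMod (n + 1)) : Finset (ZMod (n + 1)) :=
  cRun (n + 1) (List.ofFn β) ∅

def Fib (n : ℕ) (x : ZMod (n + 1)) : Finset (Fin n → ZMod (n + 1)) :=
  Finset.univ.filter (fun β => x ∉ OccF β)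

lemma OccF_card {n : ℕ} (β : Fin n → ZMod (n + 1)) : (OccF β).card = n := by
  have := cRun_card (List.ofFn β) (∅ : Finset (ZMod (n + 1))) (by simp)
  simpa [OccF] using this

lemma OccF_shift {n : ℕ} (β : Fin n → ZMod (n + 1)) (c : ZMod (n + 1)) :
    OccF (fun i => β i + c) = (OccF β).image (· + c) := by
  have h := cRun_shift (List.ofFn β) (∅ : Finset (ZMod (n + 1))) c
  simp only [Finset.image_empty] at h
  unfold OccF
  rw [← h]
  congr 1
  rw [List.map_ofFn]
  rfl

lemma Fib_card_eq (n : ℕ) (x y : ZMod (n + 1)) : (Fib n x).card = (Fib n y).card := by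
  obtain ⟨c, rfl⟩ : ∃ c, y = x + c := ⟨y - x, by ring⟩
  apply Finset.card_nbij (fun β => fun i => β i + c)
  · intro β hβ
    simp only [Fib, Finset.mem_coe, Finset.mem_filter, Finset.mem_univ, true_and] at hβ ⊢
    rw [OccF_shift, mem_image_add_right]
    exact hβ
  · intro β _ γ _ h
    funext i
    exact add_right_cancel (congrFun h i)
  · intro γ hγ
    simp only [Finset.coe_filter, Set.mem_setOf_eq, Fib, Finset.mem_univ, true_and,
      Set.mem_image] at hγ ⊢
    refine ⟨fun i => γ i - c, ?_, by funext i; ring⟩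
    have hocc : OccF γ = (OccF (fun i => γ i - c)).image (· + c) := by
      rw [← OccF_shift]
      congr 1
      funext i
      ring
    intro h0
    apply hγ
    rw [hocc, mem_image_add_right]
    exact h0

lemma sum_Fib (n : ℕ) : ∑ x : ZMod (n + 1), (Fib n x).card = (n + 1) ^ n := by
  have h1 : ∀ x : ZMod (n + 1), (Fib n x).card
      = ∑ β : Fin n → ZMod (n + 1), if x ∉ OccF β then 1 else 0 := by
    intro x
    simpa [Fib] using Finset.card_filter (fun β => x ∉ OccF β) Finset.univ
  simp_rw [h1]
  rw [Finset.sum_comm]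
  have h2 : ∀ β : Fin n → ZMod (n + 1),
      (∑ x : ZMod (n + 1), if x ∉ OccF β then 1 else 0) = 1 := by
    intro β
    rw [← Finset.card_filter]
    have : Finset.univ.filter (fun x => x ∉ OccF β) = (OccF β)ᶜ := by
      ext x; simp
    rw [this, Finset.card_compl, OccF_card]
    simp [ZMod.card]
  simp_rw [h2]
  simp [Finset.card_univ, ZMod.card]

lemma Fib_card (n : ℕ) (h : 1 ≤ n) (x : ZMod (n + 1)) :
    (Fib n x).card = (n + 1) ^ (n - 1) := by
  have hs := sum_Fib n
  rw [Finset.sum_congr rfl (fun y _ => Fib_card_eq n y x)] at hs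
  rw [Finset.sum_const, Finset.card_univ, ZMod.card, smul_eq_mul] at hs
  have hpow : (n + 1) * (n + 1) ^ (n - 1) = (n + 1) ^ n := by
    rw [← pow_succ']
    congr 1
    omega
  rw [← hpow] at hs
  exact Nat.eq_of_mul_eq_mul_left (by omega) hs

/-! ### Simulation of the classical run by the circular run -/

lemma cast_inj_of_le {n x y : ℕ} (hx : x ≤ n) (hy : y ≤ n)
    (h : (x : ZMod (n + 1)) = (y : ZMod (n + 1))) : x = y := by
  have := congrArg ZMod.val h
  rwa [ZMod.val_cast_of_lt (by omega), ZMod.val_cast_of_lt (by omega)] at this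

lemma mem_image_cast {n : ℕ} {occ : Finset ℕ} (hocc : occ ⊆ Finset.Icc 1 n) {s : ℕ}
    (hs : s ≤ n) : (s : ZMod (n + 1)) ∈ occ.image (Nat.cast) ↔ s ∈ occ := by
  constructor
  · intro h
    obtain ⟨y, hy, hys⟩ := Finset.mem_image.mp h
    have hy' : y ≤ n := (Finset.mem_Icc.mp (hocc hy)).2
    rwa [cast_inj_of_le hy' hs hys] at hy
  · intro h
    exact Finset.mem_image.mpr ⟨s, h, rfl⟩

lemma cTry_cast {n : ℕ} {occ : Finset ℕ} (hocc : occ ⊆ Finset.Icc 1 n) {a : ℕ}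
    (ha1 : 1 ≤ a) (han : a ≤ n) :
    cTry (n + 1) (occ.image Nat.cast) (a : ZMod (n + 1)) =
      match classicalTry n occ a with
      | some s => some ((s : ℕ) : ZMod (n + 1))
      | none => some 0 := by
  unfold cTry classicalTry
  have hsplit : List.range' a (n + 1 - a) ++ List.range' (n + 1) a = List.range' a (n + 1) := by
    have h := List.range'_append (s := a) (m := n + 1 - a) (n := a) (step := 1)
    rw [one_mul] at h
    rw [show a + (n + 1 - a) = n + 1 by omega] at h
    rw [show n + 1 - a + a = n + 1 by omega] at h
    exact h
  have hlist : (List.range (n + 1)).map (fun j : ℕ => ((a : ZMod (n + 1)) + (j : ZMod (n + 1)) : ZMod (n + 1)))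
      = (List.range' a (n + 1 - a)).map (Nat.cast) ++ (List.range' (n + 1) a).map Nat.cast := by
    rw [← List.map_append, hsplit, List.range'_eq_map_range, List.map_map]
    congr 1
    funext j
    simp
  rw [hlist, List.find?_append, List.find?_map, List.find?_map]
  have h1 : List.find? ((fun s => decide (s ∉ occ.image Nat.cast)) ∘ (Nat.cast : ℕ → ZMod (n + 1))) (List.range' a (n + 1 - a))
      = List.find? (fun s => decide (s ∉ occ)) (List.range' a (n + 1 - a)) := by
    apply find?_congr'
    intro x hx
    have hx' : x ≤ n := by
      have := (List.mem_range'_1.mp hx).2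
      omega
    simp only [Function.comp_apply]
    exact decide_eq_decide.mpr (by rw [mem_image_cast hocc hx'])
  rw [h1]
  cases hc : List.find? (fun s => decide (s ∉ occ)) (List.range' a (n + 1 - a)) with
  | some s => simp
  | none =>
    simp only [Option.map_none, Option.none_or]
    have hr : List.range' (n + 1) a = (n + 1) :: List.range' (n + 2) (a - 1) := by
      rw [show a = (a - 1) + 1 by omega, List.range'_succ]
      norm_num
    rw [hr, List.find?_cons]
    have h0 : (((n + 1 : ℕ)) : ZMod (n + 1)) = 0 := ZMod.natCast_self (n + 1)
    have hz : (0 : ZMod (n + 1)) ∉ occ.image Nat.cast := by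
      intro h
      obtain ⟨y, hy, hy0⟩ := Finset.mem_image.mp h
      have hy' := Finset.mem_Icc.mp (hocc hy)
      have : y = 0 := cast_inj_of_le hy'.2 (by omega) (by simpa using hy0)
      omega
    have hp : ((fun s => decide (s ∉ occ.image (Nat.cast : ℕ → ZMod (n + 1)))) ∘ Nat.cast) (n + 1) = true := by
      simp only [Function.comp_apply, h0]
      simpa using hz
    rw [hp]
    simp [h0]

lemma sim (n : ℕ) (L : List ℕ) : ∀ occ : Finset ℕ, (∀ a ∈ L, 1 ≤ a ∧ a ≤ n) →
    occ ⊆ Finset.Icc 1 n →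
    ((classicalRunAux n L occ).isSome = true ↔
      (0 : ZMod (n + 1)) ∉ cRun (n + 1) (L.map Nat.cast) (occ.image Nat.cast)) := by
  induction L with
  | nil =>
    intro occ _ hocc
    simp only [classicalRunAux, Option.isSome_some, List.map_nil, cRun_nil, true_iff]
    intro h
    obtain ⟨y, hy, hy0⟩ := Finset.mem_image.mp h
    have hy' := Finset.mem_Icc.mp (hocc hy)
    have : y = 0 := cast_inj_of_le hy'.2 (by omega) (by simpa using hy0)
    omega
  | cons a L ih =>
    intro occ hL hocc
    obtain ⟨ha1, han⟩ := hL a List.mem_cons_self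
    have htry := cTry_cast hocc ha1 han
    rw [List.map_cons, cRun_cons]
    cases hc : classicalTry n occ a with
    | none =>
      rw [hc] at htry
      have hstep : cStep (n + 1) (occ.image Nat.cast) (a : ZMod (n + 1))
          = insert 0 (occ.image Nat.cast) := by
        unfold cStep
        rw [htry]
      rw [hstep]
      simp only [classicalRunAux, hc]
      constructor
      · intro h; exact absurd h (by simp)
      · intro h
        exact absurd (subset_cRun _ _ _ (Finset.mem_insert_self _ _)) h
    | some s =>
      rw [hc] at htry
      have hcfind : List.find? (fun t => decide (t ∉ occ)) (List.range' a (n + 1 - a)) = some s := hc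
      have hsrange := List.mem_range'_1.mp (List.mem_of_find?_eq_some hcfind)
      have hnot : s ∉ occ := by simpa using List.find?_some hcfind
      have hs1 : 1 ≤ s := le_trans ha1 hsrange.1
      have hsn : s ≤ n := by omega
      have hstep : cStep (n + 1) (occ.image Nat.cast) (a : ZMod (n + 1))
          = (insert s occ).image Nat.cast := by
        unfold cStep
        rw [htry, Finset.image_insert]
      rw [hstep]
      have := ih (insert s occ) (fun b hb => hL b (List.mem_cons_of_mem _ hb))
        (Finset.insert_subset (Finset.mem_Icc.mpr ⟨hs1, hsn⟩) hocc)
      simp only [classicalRunAux, hc, Option.isSome_map]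
      exact this

end ParkAux

theorem stmt1 (n : ℕ) (h : 1 ≤ n) :
    (classicalPFs n n).card = (n + 1) ^ (n - 1) := by
  classical
  rw [← ParkAux.Fib_card n h 0]
  have key : ∀ α : Fin n → Fin n,
      α ∈ classicalPFs n n ↔
        (fun i => (((α i : ℕ) + 1 : ℕ) : ZMod (n + 1))) ∈ ParkAux.Fib n 0 := by
    intro α
    simp only [classicalPFs, ParkAux.Fib, Finset.mem_filter, Finset.mem_univ, true_and]
    have hb : ∀ a ∈ prefList α, 1 ≤ a ∧ a ≤ n := by
      intro a ha
      obtain ⟨i, hi⟩ := List.mem_ofFn.mp ha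
      have h2 : (α i : ℕ) + 1 = a := hi
      have := (α i).isLt
      omega
    have hsim := ParkAux.sim n (prefList α) ∅ hb (by simp)
    simp only [Finset.image_empty] at hsim
    rw [show classicalRun n (prefList α) = classicalRunAux n (prefList α) ∅ from rfl, hsim]
    have hl : (prefList α).map (Nat.cast : ℕ → ZMod (n + 1))
        = List.ofFn (fun i => (((α i : ℕ) + 1 : ℕ) : ZMod (n + 1))) := by
      unfold prefList
      rw [List.map_ofFn]
      rfl
    unfold ParkAux.OccF
    rw [hl]
  apply Finset.card_nbij (fun α => fun i => (((α i : ℕ) + 1 : ℕ) : ZMod (n + 1)))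
  · intro α hα
    exact (key α).mp hα
  · intro α _ β _ hEq
    funext i
    have h1 : ((α i : ℕ) + 1) = ((β i : ℕ) + 1) :=
      ParkAux.cast_inj_of_le (by have := (α i).isLt; omega) (by have := (β i).isLt; omega)
        (congrFun hEq i)
    exact Fin.ext (by omega)
  · intro γ hγ
    rw [Finset.mem_coe] at hγ
    have hγ0 : (0 : ZMod (n + 1)) ∉ ParkAux.OccF γ := (Finset.mem_filter.mp hγ).2
    have hne : ∀ i, γ i ≠ 0 := by
      intro i h0
      exact hγ0 (ParkAux.zero_mem_cRun _ _ (Or.inl (List.mem_ofFn.mpr ⟨i, h0⟩)))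
    have hval : ∀ i, 1 ≤ (γ i).val ∧ (γ i).val ≤ n := by
      intro i
      have h1 := ZMod.val_lt (γ i)
      have h2 : (γ i).val ≠ 0 := fun hv => hne i ((ZMod.val_eq_zero _).mp hv)
      omega
    obtain ⟨α, hα⟩ : ∃ α : Fin n → Fin n, ∀ i, (α i : ℕ) = (γ i).val - 1 :=
      ⟨fun i => ⟨(γ i).val - 1, by have := ZMod.val_lt (γ i); have := (hval i).1; omega⟩,
        fun i => rfl⟩
    have hlift : (fun i => (((α i : ℕ) + 1 : ℕ) : ZMod (n + 1))) = γ := by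
      funext i
      rw [hα i, Nat.sub_add_cancel (hval i).1]
      exact ZMod.natCast_rightInverse (γ i)
    exact ⟨α, Finset.mem_coe.mpr ((key α).mpr (by rw [hlift]; exact hγ)), hlift⟩
end

section
/- For all 0 < k < n, every (k-1)-Naples parking function of length n is a k-Naples parking function of length n; i.e., PF_n(k-1) ⊆ PF_n(k). -/
namespace NaplesAux

open Finset

/-- number of occupied spots among `1,…,j`. -/
def cnt (S : Finset ℕ) (j : ℕ) : ℕ := (Finset.Ioc 0 j ∩ S).card

lemma cnt_split (S : Finset ℕ) {u v : ℕ} (h : u ≤ v) :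
    cnt S v = cnt S u + (Finset.Ioc u v ∩ S).card := by
  unfold cnt
  rw [← Finset.Ioc_union_Ioc_eq_Ioc (Nat.zero_le u) h, Finset.union_inter_distrib_right,
    Finset.card_union_of_disjoint]
  refine Finset.disjoint_left.mpr ?_
  intro x hx hx'
  simp only [Finset.mem_inter, Finset.mem_Ioc] at hx hx'
  omega

lemma cnt_full {S : Finset ℕ} {u v : ℕ} (h : u ≤ v) (hsub : Finset.Ioc u v ⊆ S) :
    cnt S v = cnt S u + (v - u) := by
  rw [cnt_split S h, Finset.inter_eq_left.mpr hsub, Nat.card_Ioc]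

lemma cnt_missing {S : Finset ℕ} {u v w : ℕ} (h : u ≤ v) (hw1 : u < w) (hw2 : w ≤ v)
    (hwS : w ∉ S) : cnt S v ≤ cnt S u + (v - u - 1) := by
  rw [cnt_split S h]
  have hsub : Finset.Ioc u v ∩ S ⊆ (Finset.Ioc u v).erase w := by
    intro x hx
    rcases Finset.mem_inter.mp hx with ⟨h1, h2⟩
    exact Finset.mem_erase.mpr ⟨fun hxw => hwS (hxw ▸ h2), h1⟩
  have := Finset.card_le_card hsub
  rw [Finset.card_erase_of_mem (Finset.mem_Ioc.mpr ⟨hw1, hw2⟩), Nat.card_Ioc] at this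
  omega

lemma cnt_insert {S : Finset ℕ} {s : ℕ} (hs : s ∉ S) (h1 : 1 ≤ s) (j : ℕ) :
    cnt (insert s S) j = cnt S j + if s ≤ j then 1 else 0 := by
  unfold cnt
  rw [Finset.inter_comm, Finset.inter_comm _ S]
  by_cases hj : s ≤ j
  · rw [if_pos hj, Finset.insert_inter_of_mem (Finset.mem_Ioc.mpr ⟨h1, hj⟩),
      Finset.card_insert_of_notMem (by simp [hs])]
  · rw [if_neg hj, Finset.insert_inter_of_notMem (by simp [Finset.mem_Ioc]; omega)]
    omega

lemma cnt_top {S : Finset ℕ} {n : ℕ} (h : S ⊆ Finset.Ioc 0 n) : cnt S n = S.card := by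
  unfold cnt; rw [Finset.inter_eq_right.mpr h]

/-- the invariant comparing the `k`-run occupied set `O` with the `(k-1)`-run
occupied set `O'`. -/
def Inv (n : ℕ) (O O' : Finset ℕ) : Prop :=
  O ⊆ Finset.Ioc 0 n ∧ O' ⊆ Finset.Ioc 0 n ∧ O.card = O'.card ∧ ∀ j, cnt O' j ≤ cnt O j

lemma findMapRange {p : ℕ → Bool} :
    ∀ (k : ℕ) (f : ℕ → ℕ) (s : ℕ),
      ((List.range k).map f).find? p = some s →
      ∃ i0 < k, f i0 = s ∧ p s = true ∧ ∀ i < i0, p (f i) = false := by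
  intro k
  induction k with
  | zero => simp
  | succ m ih =>
    intro f s h
    rw [List.range_succ_eq_map, List.map_cons, List.map_map] at h
    by_cases hp : p (f 0)
    · rw [List.find?_cons_of_pos hp] at h
      cases h
      exact ⟨0, Nat.succ_pos m, rfl, hp, fun i hi => absurd hi (Nat.not_lt_zero i)⟩
    · rw [List.find?_cons_of_neg hp] at h
      obtain ⟨i0, hi0, hf, hps, hprev⟩ := ih (f ∘ Nat.succ) s h
      refine ⟨i0 + 1, by omega, hf, hps, fun i hi => ?_⟩
      cases i with
      | zero => exact Bool.eq_false_iff.mpr hp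
      | succ i' => exact hprev i' (by omega)

lemma try_some {κ n a s : ℕ} {O : Finset ℕ} (ha : 1 ≤ a) (han : a ≤ n)
    (h : naplesTry κ n O a = some s) :
    s ∉ O ∧ 1 ≤ s ∧ s ≤ n ∧ a ≤ s + κ ∧
      ((a < s ∧ ∀ x, 1 ≤ x → x < s → a ≤ x + κ → x ∈ O) ∨
        (s ≤ a ∧ Finset.Ioc s a ⊆ O)) := by
  unfold naplesTry at h
  split at h
  · next haO =>
    cases h
    exact ⟨haO, ha, han, by omega, Or.inr ⟨le_rfl, by simp⟩⟩
  · next haO =>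
    have haO : a ∈ O := not_not.mp haO
    rcases hb : ((List.range κ).map fun j => a - (j + 1)).find?
        (fun s => decide (1 ≤ s ∧ s ∉ O)) with _ | sb
    · rw [hb] at h
      simp only at h
      rw [List.range'_eq_map_range] at h
      obtain ⟨i0, hi0, hf, hps, hprev⟩ := findMapRange _ _ _ h
      have hs : s = a + 1 + i0 := by omega
      have hsO : s ∉ O := by simpa using hps
      have hball : ∀ x ∈ (List.range κ).map fun j => a - (j + 1),
          ¬(fun s => decide (1 ≤ s ∧ s ∉ O)) x = true := List.find?_eq_none.mp hb
      refine ⟨hsO, by omega, by omega, by omega, Or.inl ⟨by omega, ?_⟩⟩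
      intro x hx1 hxs hxκ
      rcases lt_trichotomy x a with hxa | hxa | hxa
      · have hmem : x ∈ (List.range κ).map fun j => a - (j + 1) := by
          refine List.mem_map.mpr ⟨a - x - 1, List.mem_range.mpr (by omega), by omega⟩
        have := hball x hmem
        simp only [decide_eq_true_eq, not_and, not_not] at this
        exact this hx1
      · exact hxa ▸ haO
      · have := hprev (x - a - 1) (by omega)
        have hx' : a + 1 + (x - a - 1) = x := by omega
        rw [hx'] at this
        simpa using this
    · rw [hb] at h
      simp only at h
      cases h
      obtain ⟨i0, hi0, hf, hps, hprev⟩ := findMapRange _ _ _ hb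
      simp only [decide_eq_true_eq] at hps
      obtain ⟨hs1, hsO⟩ := hps
      have hs : a = s + i0 + 1 := by omega
      refine ⟨hsO, hs1, by omega, by omega, Or.inr ⟨by omega, ?_⟩⟩
      intro x hx
      rcases Finset.mem_Ioc.mp hx with ⟨hx1, hx2⟩
      rcases eq_or_lt_of_le hx2 with hxa | hxa
      · exact hxa ▸ haO
      · have := hprev (a - x - 1) (by omega)
        have hx' : a - (a - x - 1 + 1) = x := by omega
        rw [hx'] at this
        simp only [decide_eq_false_iff_not, not_and, not_not] at this
        exact this (by omega)

lemma try_none_of {κ n a : ℕ} {O : Finset ℕ} (ha : 1 ≤ a) (han : a ≤ n)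
    (h : ∀ x, 1 ≤ x → x ≤ n → a ≤ x + κ → x ∈ O) :
    naplesTry κ n O a = none := by
  have haO : a ∈ O := h a ha han (by omega)
  unfold naplesTry
  rw [if_neg (by simpa using haO)]
  have hb : ((List.range κ).map fun j => a - (j + 1)).find?
      (fun s => decide (1 ≤ s ∧ s ∉ O)) = none := by
    refine List.find?_eq_none.mpr ?_
    intro y hy
    obtain ⟨j, hj, hjy⟩ := List.mem_map.mp hy
    simp only [decide_eq_true_eq, not_and, not_not]
    intro hy1
    rw [List.mem_range] at hj
    exact h y hy1 (by omega) (by omega)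
  rw [hb]
  simp only
  refine List.find?_eq_none.mpr ?_
  intro y hy
  rw [List.mem_range'_1] at hy
  simp only [decide_eq_true_eq, not_not]
  exact h y (by omega) (by omega) (by omega)

lemma try_none_facts {κ n a : ℕ} {O : Finset ℕ}
    (h : naplesTry κ n O a = none) :
    ∀ x, 1 ≤ x → x ≤ n → a ≤ x + κ → x ∈ O := by
  unfold naplesTry at h
  split at h
  · exact absurd h (by simp)
  · next haO =>
    have haO : a ∈ O := not_not.mp haO
    rcases hb : ((List.range κ).map fun j => a - (j + 1)).find?
        (fun s => decide (1 ≤ s ∧ s ∉ O)) with _ | sb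
    · rw [hb] at h
      simp only at h
      have hfwd := List.find?_eq_none.mp h
      have hbck := List.find?_eq_none.mp hb
      intro x hx1 hxn hxκ
      rcases lt_trichotomy x a with hxa | hxa | hxa
      · have hmem : x ∈ (List.range κ).map fun j => a - (j + 1) :=
          List.mem_map.mpr ⟨a - x - 1, List.mem_range.mpr (by omega), by omega⟩
        have := hbck x hmem
        simp only [decide_eq_true_eq, not_and, not_not] at this
        exact this hx1
      · exact hxa ▸ haO
      · have := hfwd x (by rw [List.mem_range'_1]; omega)
        simpa using this
    · rw [hb] at h; simp at h

lemma step {n k a : ℕ} (hk : 1 ≤ k) (ha : 1 ≤ a) (han : a ≤ n)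
    {O O' : Finset ℕ} {s' : ℕ} (inv : Inv n O O')
    (h' : naplesTry (k - 1) n O' a = some s') :
    ∃ s, naplesTry k n O a = some s ∧ Inv n (insert s O) (insert s' O') := by
  obtain ⟨hO, hO', hcard, hcnt⟩ := inv
  obtain ⟨hs'O, hs'1, hs'n, hs'k, hcase'⟩ := try_some ha han h'
  rcases hsome : naplesTry k n O a with _ | s
  · exfalso
    have hall := try_none_facts hsome
    set t := a - k - 1 with ht
    have htn : t ≤ n := by omega
    have h1 : Finset.Ioc t n ⊆ O := by
      intro x hx
      rcases Finset.mem_Ioc.mp hx with ⟨hx1, hx2⟩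
      exact hall x (by omega) hx2 (by omega)
    have e1 : cnt O n = cnt O t + (n - t) := cnt_full htn h1
    have e2 : cnt O' n = O'.card := cnt_top hO'
    have e3 : cnt O n = O.card := cnt_top hO
    have e4 : cnt O' n = cnt O' t + (Finset.Ioc t n ∩ O').card := cnt_split O' htn
    have e5 : n - t ≤ (Finset.Ioc t n ∩ O').card := by
      have := hcnt t; omega
    have h2 : Finset.Ioc t n ⊆ O' := by
      have heq : Finset.Ioc t n ∩ O' = Finset.Ioc t n :=
        Finset.eq_of_subset_of_card_le Finset.inter_subset_left
          (by rw [Nat.card_Ioc]; exact e5)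
      exact Finset.inter_eq_left.mp heq
    have : naplesTry (k - 1) n O' a = none := by
      refine try_none_of ha han ?_
      intro x hx1 hxn hxκ
      exact h2 (Finset.mem_Ioc.mpr ⟨by omega, hxn⟩)
    rw [this] at h'
    cases h'
  · obtain ⟨hsO, hs1, hsn, hsk, hcase⟩ := try_some ha han hsome
    refine ⟨s, rfl, ?_, ?_, ?_, ?_⟩
    · exact Finset.insert_subset (Finset.mem_Ioc.mpr ⟨hs1, hsn⟩) hO
    · exact Finset.insert_subset (Finset.mem_Ioc.mpr ⟨hs'1, hs'n⟩) hO'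
    · rw [Finset.card_insert_of_notMem hsO, Finset.card_insert_of_notMem hs'O, hcard]
    · intro j
      rw [cnt_insert hsO hs1 j, cnt_insert hs'O hs'1 j]
      by_cases hsj : s ≤ j
      · have := hcnt j
        split <;> simp [hsj] <;> omega
      · by_cases hs'j : s' ≤ j
        · rw [if_pos hs'j, if_neg hsj]
          by_contra hcon
          have heq : cnt O' j = cnt O j := le_antisymm (hcnt j) (by omega)
          rcases hcase with ⟨has, hfwd⟩ | ⟨hsa, hIoc⟩
          · set t := a - k - 1 with ht
            have hts' : t < s' := by omega
            have hsub : Finset.Ioc t j ⊆ O := by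
              intro x hx
              rcases Finset.mem_Ioc.mp hx with ⟨hx1, hx2⟩
              exact hfwd x (by omega) (by omega) (by omega)
            have e1 : cnt O j = cnt O t + (j - t) := cnt_full (by omega) hsub
            have e2 : cnt O' j ≤ cnt O' t + (j - t - 1) :=
              cnt_missing (by omega) hts' hs'j hs'O
            have := hcnt t
            omega
          · have hs'a : s' < a := by omega
            have hIoc' : Finset.Ioc s' a ⊆ O' := by
              rcases hcase' with ⟨h1, _⟩ | ⟨_, h2⟩
              · omega
              · exact h2
            have hsub : Finset.Ioc j s ⊆ O' := by
              intro x hx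
              rcases Finset.mem_Ioc.mp hx with ⟨hx1, hx2⟩
              exact hIoc' (Finset.mem_Ioc.mpr ⟨by omega, by omega⟩)
            have e1 : cnt O' s = cnt O' j + (s - j) := cnt_full (by omega) hsub
            have e2 : cnt O s ≤ cnt O j + (s - j - 1) :=
              cnt_missing (by omega) (by omega) le_rfl hsO
            have := hcnt s
            omega
        · rw [if_neg hsj, if_neg hs'j]
          have := hcnt j
          omega

lemma runAux_mono {n k : ℕ} (hk : 1 ≤ k) :
    ∀ (l : List ℕ), (∀ a ∈ l, 1 ≤ a ∧ a ≤ n) → ∀ O O' : Finset ℕ, Inv n O O' →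
      (naplesRunAux (k - 1) n l O').isSome → (naplesRunAux k n l O).isSome := by
  intro l
  induction l with
  | nil => intro _ O O' _ _; simp [naplesRunAux]
  | cons a rest ih =>
    intro hmem O O' inv h
    rcases h' : naplesTry (k - 1) n O' a with _ | s'
    · rw [naplesRunAux, h'] at h
      simp at h
    · obtain ⟨ha1, ha2⟩ := hmem a (List.mem_cons_self)
      obtain ⟨s, hs, inv'⟩ := step hk ha1 ha2 inv h'
      rw [naplesRunAux, h'] at h
      simp only [Option.isSome_map] at h
      rw [naplesRunAux, hs]
      simp only [Option.isSome_map]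
      exact ih (fun b hb => hmem b (List.mem_cons_of_mem a hb)) _ _ inv' h

end NaplesAux
theorem stmt3 (n k : ℕ) (h0 : 0 < k) (h1 : k < n) :
    naplesPFs (k - 1) n n ⊆ naplesPFs k n n := by
  intro α hα
  rw [naplesPFs, Finset.mem_filter] at hα ⊢
  refine ⟨Finset.mem_univ α, ?_⟩
  rw [naplesRun] at hα ⊢
  refine NaplesAux.runAux_mono h0 (prefList α) ?_ ∅ ∅ ?_ hα.2
  · intro a hmem
    rw [prefList] at hmem
    obtain ⟨i, hi⟩ := List.mem_ofFn.mp hmem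
    have := (α i).isLt
    omega
  · exact ⟨by simp, by simp, rfl, fun j => le_rfl⟩
end

section
/- Fix π ∈ S_{m,n} the outcome of some (k,ℓ)-pullback parking process, and i ∈ [n] with π_i > 0. If car π_i parked in spot i by backing up from an occupied preferred spot to its right, then the number of possible preferences for car π_i equals min(Right(π_i), k), where Right(π_i) is the length of the longest consecutive subsequence π_{i+1}, ..., π_{i+x} with 0 < π_t < π_i for all i+1 ≤ t ≤ i+x. -/
/-- `outcomeOf spots i = j+1` if car `j+1` (0-indexed `j`) parked in spot `i`,
and `0` if spot `i` is vacant.  Here `spots` lists the spots of cars `1,…,m`. -/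
def outcomeOf (spots : List ℕ) (i : ℕ) : ℕ :=
  match spots.findIdx? (· == i) with
  | some j => j + 1
  | none => 0

/-- The outcome of a `(k,l)`-pullback parking function, as a function sending
the (0-based) spot index `i` to the label of the car parked in spot `i+1`
(or `0` if vacant). -/
def pullOutcome (k l n : ℕ) {m : ℕ} (α : Fin m → Fin n) : Fin n → ℕ :=
  fun i => outcomeOf ((pullRun k l n (prefList α)).getD []) ((i : ℕ) + 1)

/-- The outcome of a classical parking function. -/
def classicalOutcome (n : ℕ) {m : ℕ} (α : Fin m → Fin n) : Fin n → ℕ :=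
  fun i => outcomeOf ((classicalRun n (prefList α)).getD []) ((i : ℕ) + 1)

/-- `S_{m,n}`: arrangements of the multiset `{0,…,0} ∪ [m]` with `n - m`
zeros, as functions on the `n` positions. -/
def SmnSet (m n : ℕ) : Finset (Fin n → ℕ) :=
  ((Finset.univ : Finset (Fin n → Fin (m + 1))).image
      (fun π i => (π i : ℕ))).filter
    (fun π => Finset.univ.val.map π =
      Multiset.replicate (n - m) 0 + (Multiset.range m).map (· + 1))

/-- Read an arrangement `π` at the 1-based position `t` (zero outside `[1,n]`). -/
def at1 {n : ℕ} (π : Fin n → ℕ) (t : ℕ) : ℕ :=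
  if h : 1 ≤ t ∧ t ≤ n then π ⟨t - 1, by omega⟩ else 0

/-- The spots occupied by the cars with labels `< c` (those that parked before
car `c`), as read off from the outcome `π`. -/
def occBefore {n : ℕ} (π : Fin n → ℕ) (c : ℕ) : Finset ℕ :=
  (Finset.Icc 1 n).filter (fun s => 0 < at1 π s ∧ at1 π s < c)

/-- `Right(π_i)`: the length of the longest consecutive run
`π_{i+1}, …, π_{i+x}` with `0 < π_t < π_i` throughout. -/
def rightRun {n : ℕ} (π : Fin n → ℕ) (i : ℕ) : ℕ :=
  Nat.findGreatest
    (fun x => ∀ t ∈ Finset.Icc (i + 1) (i + x), 0 < at1 π t ∧ at1 π t < at1 π i) n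

/-- `Left(π_i)`: the length of the longest consecutive run
`π_{i-x}, …, π_{i-1}` with `0 < π_t < π_i` throughout. -/
noncomputable def leftRun {n : ℕ} (π : Fin n → ℕ) (i : ℕ) : ℕ :=
  @Nat.findGreatest
    (fun x => ∀ t ∈ Finset.Icc (i - x) (i - 1), 0 < at1 π t ∧ at1 π t < at1 π i)
    (fun _ => Classical.propDecidable _) n

/-- `B(π_i) = min(Right(π_i), k)`. -/
def Bval (k : ℕ) {n : ℕ} (π : Fin n → ℕ) (i : ℕ) : ℕ :=
  min (rightRun π i) k

/-- `F(π_i)`, defined by cases: `0` if `Left(π_i) = 0`; `min(i-1, l)` if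
`Left(π_i) = i-1 > 0`; and `max(min(Left(π_i) - k, l), 0)` (truncated
subtraction) if `0 < Left(π_i) < i-1`. -/
noncomputable def Fval (k l : ℕ) {n : ℕ} (π : Fin n → ℕ) (i : ℕ) : ℕ :=
  if leftRun π i = 0 then 0
  else if leftRun π i = i - 1 then min (i - 1) l
  else min (leftRun π i - k) l

/-- `L(σ_i)`: the length of the longest consecutive run of `σ` ending at
position `i` all of whose entries are at most `σ_i`. -/
noncomputable def Lrun {n : ℕ} (σ : Fin n → ℕ) (i : ℕ) : ℕ :=
  @Nat.findGreatest
    (fun x => ∀ t ∈ Finset.Icc (i - x + 1) i, at1 σ t ≤ at1 σ i)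
    (fun _ => Classical.propDecidable _) n

lemma backFind (k a i : ℕ) (occ : Finset ℕ) (hia : i < a) :
    ((List.range k).map (fun j => a - (j + 1))).find?
        (fun s => decide (1 ≤ s ∧ s ∉ occ)) = some i ↔
      (a ≤ i + k ∧ 1 ≤ i ∧ i ∉ occ ∧ ∀ t, i < t → t < a → t ∈ occ) := by
  induction k with
  | zero => simp; omega
  | succ k ih =>
    rw [List.range_succ, List.map_append, List.find?_append, Option.or_eq_some_iff]
    constructor
    · rintro (h | ⟨hnone, hsome⟩)
      · obtain ⟨h1, h2, h3, h4⟩ := ih.mp h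
        exact ⟨by omega, h2, h3, h4⟩
      · have hp := List.find?_some hsome
        have hm := List.mem_of_find?_eq_some hsome
        simp only [List.map_cons, List.map_nil, List.mem_cons, List.not_mem_nil,
          or_false] at hm
        simp only [decide_eq_true_eq] at hp
        rw [List.find?_eq_none] at hnone
        simp only [List.mem_map, List.mem_range, decide_eq_true_eq, not_and,
          not_not, forall_exists_index, and_imp] at hnone
        refine ⟨by omega, hp.1, hp.2, ?_⟩
        intro t hit hta
        have hj : a - (a - t - 1 + 1) = t := by omega
        have := hnone t (a - t - 1) (by omega) hj
        exact this (by omega)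
    · rintro ⟨h1, h2, h3, h4⟩
      by_cases hak : a ≤ i + k
      · exact Or.inl (ih.mpr ⟨hak, h2, h3, h4⟩)
      · have hae : a = i + k + 1 := by omega
        refine Or.inr ⟨?_, ?_⟩
        · rw [List.find?_eq_none]
          intro x hx
          simp only [List.mem_map, List.mem_range] at hx
          obtain ⟨j, hj, rfl⟩ := hx
          simp only [decide_eq_true_eq, not_and, not_not]
          intro _
          exact h4 _ (by omega) (by omega)
        · have hki : a - (k + 1) = i := by omega
          simp [List.find?, hki, h2, h3]

lemma pullTry_back (k l n a i : ℕ) (occ : Finset ℕ) (hia : i < a) :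
    pullTry k l n occ a = some i ↔
      a ∈ occ ∧ ((List.range k).map (fun j => a - (j + 1))).find?
        (fun s => decide (1 ≤ s ∧ s ∉ occ)) = some i := by
  unfold pullTry
  by_cases ha : a ∉ occ
  · rw [if_pos ha]
    simp only [Option.some.injEq]
    constructor
    · intro h; omega
    · rintro ⟨h, -⟩; exact absurd h ha
  · rw [if_neg ha]
    have haocc : a ∈ occ := not_not.mp ha
    rcases hfd : ((List.range k).map (fun j => a - (j + 1))).find?
        (fun s => decide (1 ≤ s ∧ s ∉ occ)) with _ | s
    · simp only [haocc, true_and]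
      constructor
      · intro h
        have := List.mem_of_find?_eq_some h
        simp only [List.mem_map, List.mem_range] at this
        omega
      · intro h; exact absurd h (by simp)
    · simp [haocc]

theorem stmt11 (k l m n : ℕ) (hm : m ≤ n) (π : Fin n → ℕ)
    (hπ : π ∈ SmnSet m n) (i : ℕ) (hi1 : 1 ≤ i) (hin : i ≤ n)
    (hpos : 0 < at1 π i) :
    ((Finset.Icc 1 n).filter
        (fun a => i < a ∧ pullTry k l n (occBefore π (at1 π i)) a = some i)).card
      = min (rightRun π i) k := by
  have hmem : ∀ t, t ∈ occBefore π (at1 π i) ↔ 0 < at1 π t ∧ at1 π t < at1 π i := by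
    intro t
    simp only [occBefore, Finset.mem_filter, Finset.mem_Icc, and_iff_right_iff_imp]
    intro ⟨h1, h2⟩
    unfold at1 at h1
    by_contra hcon
    rw [dif_neg (by omega)] at h1
    omega
  have hP0 : ∀ t ∈ Finset.Icc (i + 1) (i + 0), 0 < at1 π t ∧ at1 π t < at1 π i := by
    simp
  have hspec : ∀ t ∈ Finset.Icc (i + 1) (i + rightRun π i),
      0 < at1 π t ∧ at1 π t < at1 π i := by
    unfold rightRun
    exact Nat.findGreatest_spec (P := fun x => ∀ t ∈ Finset.Icc (i + 1) (i + x), 0 < at1 π t ∧ at1 π t < at1 π i) (Nat.zero_le n) hP0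
  have hatle : ∀ t, 0 < at1 π t → t ≤ n := by
    intro t ht
    unfold at1 at ht
    by_contra hcon
    rw [dif_neg (by omega)] at ht
    omega
  have hkey : (Finset.Icc 1 n).filter
        (fun a => i < a ∧ pullTry k l n (occBefore π (at1 π i)) a = some i)
      = Finset.Icc (i + 1) (i + min (rightRun π i) k) := by
    ext a
    simp only [Finset.mem_filter, Finset.mem_Icc]
    constructor
    · rintro ⟨⟨ha1, han⟩, hia, htry⟩
      rw [pullTry_back k l n a i _ hia] at htry
      obtain ⟨haocc, hfind⟩ := htry
      rw [backFind k a i _ hia] at hfind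
      obtain ⟨hak, hi1', hinocc, hall⟩ := hfind
      have hrun : ∀ t ∈ Finset.Icc (i + 1) (i + (a - i)),
          0 < at1 π t ∧ at1 π t < at1 π i := by
        intro t ht
        simp only [Finset.mem_Icc] at ht
        rcases eq_or_lt_of_le ht.2 with heq | hlt
        · have hta : t = a := by omega
          rw [hta]
          exact (hmem a).mp haocc
        · exact (hmem t).mp (hall t (by omega) (by omega))
      have hle : a - i ≤ rightRun π i := by
        unfold rightRun
        exact Nat.le_findGreatest (P := fun x => ∀ t ∈ Finset.Icc (i + 1) (i + x), 0 < at1 π t ∧ at1 π t < at1 π i) (by omega) hrun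
      omega
    · rintro ⟨hia, hak⟩
      have hin2 : ∀ t, i < t → t ≤ a → 0 < at1 π t ∧ at1 π t < at1 π i := by
        intro t ht1 ht2
        exact hspec t (by simp only [Finset.mem_Icc]; omega)
      have haocc : a ∈ occBefore π (at1 π i) := (hmem a).mpr (hin2 a hia le_rfl)
      have han : a ≤ n := hatle a (hin2 a hia le_rfl).1
      refine ⟨⟨by omega, han⟩, hia, ?_⟩
      rw [pullTry_back k l n a i _ hia, backFind k a i _ hia]
      refine ⟨haocc, by omega, hi1, ?_, ?_⟩
      · simp only [hmem]
        omega
      · intro t ht1 ht2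
        exact (hmem t).mpr (hin2 t ht1 (by omega))
  rw [hkey, Nat.card_Icc]
  omega
end

section
/- For π ∈ S_{m,n} and i ∈ [n] with π_i > 0, the number of preferences a ∈ [n] such that, given the cars π_j with π_j < π_i already parked in their spots, car π_i parks in spot i under the (k,ℓ)-pullback rule, equals B(π_i) + F(π_i) + 1, where B(π_i) = min(Right(π_i), k) and F(π_i) is as defined by the cases: 0 if Left(π_i)=0, min(i-1,ℓ) if Left(π_i)=i-1>0, max(min(Left(π_i)-k, ℓ), 0) if 0 < Left(π_i) < i-1. -/
private lemma find_back_eq_some (occ : Finset ℕ) (k a i : ℕ) :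
    ((List.range k).map (fun j => a - (j + 1))).find?
        (fun s => decide (1 ≤ s ∧ s ∉ occ)) = some i ↔
      1 ≤ i ∧ i < a ∧ a ≤ i + k ∧ i ∉ occ ∧ ∀ s, i < s → s < a → s ∈ occ := by
  induction k generalizing i with
  | zero =>
      simp only [List.range_zero, List.map_nil, List.find?_nil]
      exact iff_of_false (by simp) (by rintro ⟨h1, h2, h3, -, -⟩; omega)
  | succ k ih =>
      rw [List.range_succ, List.map_append, List.find?_append]
      rcases hb : ((List.range k).map (fun j => a - (j + 1))).find?
          (fun s => decide (1 ≤ s ∧ s ∉ occ)) with _ | j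
      · have hno : ∀ s, 1 ≤ s → s < a → a ≤ s + k → s ∈ occ := by
          intro s h1 h2 h3
          have hmem : (s : ℕ) ∈ (List.range k).map (fun j => a - (j + 1)) := by
            simp only [List.mem_map, List.mem_range]
            exact ⟨a - s - 1, by omega, by omega⟩
          have := List.find?_eq_none.mp hb s hmem
          simp only [decide_eq_true_eq, not_and, not_not] at this
          exact this (by omega)
        simp only [Option.none_or, List.map_cons, List.map_nil, List.find?_cons,
          List.find?_nil]
        by_cases hp : (1 ≤ a - (k + 1) ∧ a - (k + 1) ∉ occ)
        · rw [decide_eq_true hp]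
          constructor
          · rintro h
            have hx : a - (k + 1) = i := by simpa using h
            obtain ⟨hp1, hp2⟩ := hp
            refine ⟨by omega, by omega, by omega, hx ▸ hp2, ?_⟩
            intro s hs1 hs2
            exact hno s (by omega) hs2 (by omega)
          · rintro ⟨h1, h2, h3, h4, h5⟩
            have : ¬ a ≤ i + k := by
              intro hle
              exact h4 (hno i h1 h2 hle)
            have : a - (k + 1) = i := by omega
            simp [this]
        · rw [decide_eq_false hp]
          constructor
          · intro h; exact absurd h (by simp)
          · rintro ⟨h1, h2, h3, h4, h5⟩
            exfalso
            have hle : ¬ a ≤ i + k := by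
              intro hle
              exact h4 (hno i h1 h2 hle)
            have hxi : a - (k + 1) = i := by omega
            exact hp ⟨by omega, by rw [hxi]; exact h4⟩
      · have hj := (ih j).mp hb
        obtain ⟨hj1, hj2, hj3, hj4, hj5⟩ := hj
        rw [show (Option.or (some j) (List.find? (fun s => decide (1 ≤ s ∧ s ∉ occ)) (List.map (fun j => a - (j + 1)) [k]))) = some j from rfl]
        simp only [Option.some.injEq]
        constructor
        · rintro rfl
          exact ⟨hj1, hj2, by omega, hj4, fun s h1 h2 => hj5 s h1 h2⟩
        · rintro ⟨h1, h2, h3, h4, h5⟩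
          rcases lt_trichotomy j i with h | h | h
          · exact absurd (hj5 i h h2) h4
          · exact h
          · exact absurd (h5 j h hj2) hj4

private lemma find_back_eq_none (occ : Finset ℕ) (k a : ℕ) :
    ((List.range k).map (fun j => a - (j + 1))).find?
        (fun s => decide (1 ≤ s ∧ s ∉ occ)) = none ↔
      ∀ s, 1 ≤ s → s < a → a ≤ s + k → s ∈ occ := by
  rw [List.find?_eq_none]
  constructor
  · intro h s h1 h2 h3
    have hmem : (s : ℕ) ∈ (List.range k).map (fun j => a - (j + 1)) := by
      simp only [List.mem_map, List.mem_range]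
      exact ⟨a - s - 1, by omega, by omega⟩
    have := h s hmem
    simp only [decide_eq_true_eq, not_and, not_not] at this
    exact this (by omega)
  · intro h x hx
    simp only [List.mem_map, List.mem_range] at hx
    obtain ⟨j, hj, rfl⟩ := hx
    simp only [decide_eq_true_eq, not_and, not_not]
    intro h1
    exact h _ h1 (by omega) (by omega)

private lemma find_fwd_eq_some (occ : Finset ℕ) (n l a i : ℕ) :
    ((List.range l).map (fun j => a + (j + 1))).find?
        (fun s => decide (s ≤ n ∧ s ∉ occ)) = some i ↔
      a < i ∧ i ≤ a + l ∧ i ≤ n ∧ i ∉ occ ∧ ∀ s, a < s → s < i → s ∈ occ := by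
  induction l generalizing i with
  | zero =>
      simp only [List.range_zero, List.map_nil, List.find?_nil]
      exact iff_of_false (by simp) (by rintro ⟨h1, h2, -, -, -⟩; omega)
  | succ l ih =>
      rw [List.range_succ, List.map_append, List.find?_append]
      rcases hb : ((List.range l).map (fun j => a + (j + 1))).find?
          (fun s => decide (s ≤ n ∧ s ∉ occ)) with _ | j
      · have hno : ∀ s, a < s → s ≤ a + l → s ≤ n → s ∈ occ := by
          intro s h1 h2 h3
          have hmem : (s : ℕ) ∈ (List.range l).map (fun j => a + (j + 1)) := by
            simp only [List.mem_map, List.mem_range]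
            exact ⟨s - a - 1, by omega, by omega⟩
          have := List.find?_eq_none.mp hb s hmem
          simp only [decide_eq_true_eq, not_and, not_not] at this
          exact this h3
        simp only [Option.none_or, List.map_cons, List.map_nil, List.find?_cons,
          List.find?_nil]
        by_cases hp : (a + (l + 1) ≤ n ∧ a + (l + 1) ∉ occ)
        · rw [decide_eq_true hp]
          constructor
          · rintro h
            have hx : a + (l + 1) = i := by simpa using h
            obtain ⟨hp1, hp2⟩ := hp
            refine ⟨by omega, by omega, by omega, hx ▸ hp2, ?_⟩
            intro s hs1 hs2
            exact hno s hs1 (by omega) (by omega)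
          · rintro ⟨h1, h2, h3, h4, h5⟩
            have : ¬ i ≤ a + l := by
              intro hle
              exact h4 (hno i h1 hle h3)
            have : a + (l + 1) = i := by omega
            simp [this]
        · rw [decide_eq_false hp]
          constructor
          · intro h; exact absurd h (by simp)
          · rintro ⟨h1, h2, h3, h4, h5⟩
            exfalso
            have hle : ¬ i ≤ a + l := by
              intro hle
              exact h4 (hno i h1 hle h3)
            have hxi : a + (l + 1) = i := by omega
            exact hp ⟨by omega, by rw [hxi]; exact h4⟩
      · have hj := (ih j).mp hb
        obtain ⟨hj1, hj2, hj3, hj4, hj5⟩ := hj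
        rw [show (Option.or (some j) (List.find? (fun s => decide (s ≤ n ∧ s ∉ occ)) (List.map (fun j => a + (j + 1)) [l]))) = some j from rfl]
        simp only [Option.some.injEq]
        constructor
        · rintro rfl
          exact ⟨hj1, by omega, hj3, hj4, hj5⟩
        · rintro ⟨h1, h2, h3, h4, h5⟩
          rcases lt_trichotomy j i with h | h | h
          · exact absurd (h5 j hj1 h) hj4
          · exact h
          · exact absurd (hj5 i h1 h) h4

private lemma pullTry_eq_some_iff (k l n : ℕ) (occ : Finset ℕ) (a i : ℕ) :
    pullTry k l n occ a = some i ↔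
      (a ∉ occ ∧ a = i) ∨
      (a ∈ occ ∧
        (((List.range k).map (fun j => a - (j + 1))).find?
            (fun s => decide (1 ≤ s ∧ s ∉ occ)) = some i ∨
          (((List.range k).map (fun j => a - (j + 1))).find?
              (fun s => decide (1 ≤ s ∧ s ∉ occ)) = none ∧
            ((List.range l).map (fun j => a + (j + 1))).find?
              (fun s => decide (s ≤ n ∧ s ∉ occ)) = some i))) := by
  unfold pullTry
  by_cases h : a ∈ occ
  · rw [if_neg (by simp [h])]
    rcases hb : ((List.range k).map (fun j => a - (j + 1))).find?
        (fun s => decide (1 ≤ s ∧ s ∉ occ)) with _ | s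
    · simp [h, hb]
    · simp [h, hb]
  · rw [if_pos h]
    simp [h]

private lemma at1_pos_bounds {n : ℕ} (π : Fin n → ℕ) (t : ℕ) (h : 0 < at1 π t) :
    1 ≤ t ∧ t ≤ n := by
  unfold at1 at h
  split at h
  · assumption
  · omega

theorem stmt13 (k l m n : ℕ) (hm : m ≤ n) (π : Fin n → ℕ)
    (hπ : π ∈ SmnSet m n) (i : ℕ) (hi1 : 1 ≤ i) (hin : i ≤ n)
    (hpos : 0 < at1 π i) :
    ((Finset.Icc 1 n).filter
        (fun a => pullTry k l n (occBefore π (at1 π i)) a = some i)).card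
      = Bval k π i + Fval k l π i + 1 := by
  classical
  have hmem : ∀ s, s ∈ occBefore π (at1 π i) ↔
      1 ≤ s ∧ s ≤ n ∧ 0 < at1 π s ∧ at1 π s < at1 π i := by
    intro s
    simp [occBefore, Finset.mem_filter, Finset.mem_Icc, and_assoc]
  have hinot : i ∉ occBefore π (at1 π i) := by
    rw [hmem]; rintro ⟨-, -, -, h⟩; omega
  have hBv : Bval k π i = min (rightRun π i) k := rfl
  -- right run facts
  have hRspec : ∀ t, i + 1 ≤ t → t ≤ i + rightRun π i →
      0 < at1 π t ∧ at1 π t < at1 π i := by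
    have h := Nat.findGreatest_spec
      (P := fun x => ∀ t ∈ Finset.Icc (i + 1) (i + x),
        0 < at1 π t ∧ at1 π t < at1 π i) (Nat.zero_le n)
      (by intro t ht; rw [Finset.mem_Icc] at ht; omega)
    intro t h1 h2
    exact h t (Finset.mem_Icc.mpr ⟨h1, h2⟩)
  have hRocc : ∀ t, i + 1 ≤ t → t ≤ i + rightRun π i →
      t ∈ occBefore π (at1 π i) := by
    intro t h1 h2
    obtain ⟨hp, hlt⟩ := hRspec t h1 h2
    obtain ⟨hb1, hb2⟩ := at1_pos_bounds π t hp
    exact (hmem t).mpr ⟨hb1, hb2, hp, hlt⟩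
  have hRmax : i + rightRun π i + 1 ≤ n →
      i + rightRun π i + 1 ∉ occBefore π (at1 π i) := by
    intro hle hmm
    obtain ⟨-, -, hp, hlt⟩ := (hmem _).mp hmm
    have hgr := Nat.findGreatest_is_greatest
      (P := fun x => ∀ t ∈ Finset.Icc (i + 1) (i + x),
        0 < at1 π t ∧ at1 π t < at1 π i)
      (k := rightRun π i + 1) (n := n) (Nat.lt_succ_self _) (by omega)
    apply hgr
    intro t ht; rw [Finset.mem_Icc] at ht
    rcases Nat.lt_or_ge t (i + rightRun π i + 1) with h | h
    · exact hRspec t ht.1 (by omega)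
    · have : t = i + rightRun π i + 1 := by omega
      rw [this]; exact ⟨hp, hlt⟩
  -- left run facts
  have hLspec : ∀ t, i - leftRun π i ≤ t → t ≤ i - 1 →
      0 < at1 π t ∧ at1 π t < at1 π i := by
    have h := @Nat.findGreatest_spec 0
      (fun x => ∀ t ∈ Finset.Icc (i - x) (i - 1),
        0 < at1 π t ∧ at1 π t < at1 π i)
      (fun _ => Classical.propDecidable _) n (Nat.zero_le n)
      (by intro t ht; rw [Finset.mem_Icc] at ht; omega)
    intro t h1 h2
    exact h t (Finset.mem_Icc.mpr ⟨h1, h2⟩)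
  have hat10 : at1 π 0 = 0 := by simp [at1]
  have hLle : leftRun π i ≤ i - 1 := by
    by_contra h
    push_neg at h
    have := hLspec 0 (by omega) (by omega)
    omega
  have hLocc : ∀ t, i - leftRun π i ≤ t → t ≤ i - 1 →
      t ∈ occBefore π (at1 π i) := by
    intro t h1 h2
    obtain ⟨hp, hlt⟩ := hLspec t h1 h2
    obtain ⟨hb1, hb2⟩ := at1_pos_bounds π t hp
    exact (hmem t).mpr ⟨hb1, hb2, hp, hlt⟩
  have hLmax1 : leftRun π i < i - 1 →
      i - leftRun π i - 1 ∉ occBefore π (at1 π i) := by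
    intro hlt hmm
    obtain ⟨-, -, hp, hl'⟩ := (hmem _).mp hmm
    have hgr := @Nat.findGreatest_is_greatest (leftRun π i + 1)
      (fun x => ∀ t ∈ Finset.Icc (i - x) (i - 1),
        0 < at1 π t ∧ at1 π t < at1 π i)
      (fun _ => Classical.propDecidable _) n (Nat.lt_succ_self _) (by omega)
    apply hgr
    intro t ht; rw [Finset.mem_Icc] at ht
    rcases Nat.lt_or_ge (i - leftRun π i - 1) t with h | h
    · exact hLspec t (by omega) ht.2
    · have : t = i - leftRun π i - 1 := by omega
      rw [this]; exact ⟨hp, hl'⟩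
  have hLmax2 : ∀ a, a ∈ occBefore π (at1 π i) →
      (∀ s, a < s → s < i → s ∈ occBefore π (at1 π i)) →
      i - leftRun π i ≤ a := by
    intro a ha hs
    by_contra hc
    push_neg at hc
    obtain ⟨ha1, han, hap, hal⟩ := (hmem a).mp ha
    have hP : ∀ t ∈ Finset.Icc (i - (i - a)) (i - 1),
        0 < at1 π t ∧ at1 π t < at1 π i := by
      intro t ht; rw [Finset.mem_Icc] at ht
      rcases Nat.lt_or_ge a t with h | h
      · obtain ⟨-, -, hp, hl'⟩ := (hmem t).mp (hs t h (by omega))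
        exact ⟨hp, hl'⟩
      · have : t = a := by omega
        rw [this]; exact ⟨hap, hal⟩
    have := @Nat.le_findGreatest (i - a)
      (fun x => ∀ t ∈ Finset.Icc (i - x) (i - 1),
        0 < at1 π t ∧ at1 π t < at1 π i)
      (fun _ => Classical.propDecidable _) n (by omega) hP
    have h2 : i - a ≤ leftRun π i := this
    omega
  -- values of F
  have hF0 : leftRun π i = 0 → Fval k l π i = 0 := by
    intro h; unfold Fval; rw [if_pos h]
  have hF1 : leftRun π i ≠ 0 → leftRun π i = i - 1 →
      Fval k l π i = min (i - 1) l := by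
    intro h h'; unfold Fval; rw [if_neg h, if_pos h']
  have hF2 : leftRun π i ≠ 0 → leftRun π i ≠ i - 1 →
      Fval k l π i = min (leftRun π i - k) l := by
    intro h h'; unfold Fval; rw [if_neg h, if_neg h']
  have hFle : Fval k l π i ≤ i - 1 := by
    by_cases h0 : leftRun π i = 0
    · have := hF0 h0; omega
    · by_cases h1 : leftRun π i = i - 1
      · have := hF1 h0 h1; omega
      · have := hF2 h0 h1; omega
  -- the key characterization
  have key : ∀ a, (a ∈ Finset.Icc 1 n ∧
      pullTry k l n (occBefore π (at1 π i)) a = some i) ↔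
      (i - Fval k l π i ≤ a ∧ a ≤ i + Bval k π i) := by
    intro a
    rw [Finset.mem_Icc, pullTry_eq_some_iff, find_back_eq_some,
      find_back_eq_none, find_fwd_eq_some]
    constructor
    · rintro ⟨⟨ha1, han⟩, hcase⟩
      rcases hcase with ⟨hno, rfl⟩ | ⟨hocc', hbs | ⟨hbn, hfs⟩⟩
      · omega
      · obtain ⟨h1, h2, h3, -, h5⟩ := hbs
        have haR : a ≤ i + rightRun π i := by
          by_contra hgt
          push_neg at hgt
          have han' : a ≤ n := ((hmem a).mp hocc').2.1
          have hocc2 : i + rightRun π i + 1 ∈ occBefore π (at1 π i) := by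
            rcases Nat.lt_or_ge (i + rightRun π i + 1) a with h | h
            · exact h5 _ (by omega) h
            · have : i + rightRun π i + 1 = a := by omega
              rw [this]; exact hocc'
          exact hRmax (by omega) hocc2
        omega
      · obtain ⟨hai, hial, -, -, hfo⟩ := hfs
        have haL := hLmax2 a hocc' hfo
        have ha1' : 1 ≤ a := ((hmem a).mp hocc').1
        have hL0 : leftRun π i ≠ 0 := by omega
        refine ⟨?_, by omega⟩
        by_cases hLi : leftRun π i = i - 1
        · have := hF1 hL0 hLi; omega
        · have hLlt : leftRun π i < i - 1 := by omega
          have hak : i - leftRun π i + k ≤ a := by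
            by_contra h'
            push_neg at h'
            have : i - leftRun π i - 1 ∈ occBefore π (at1 π i) :=
              hbn _ (by omega) (by omega) (by omega)
            exact hLmax1 hLlt this
          have := hF2 hL0 hLi
          omega
    · rintro ⟨h1, h2⟩
      rcases lt_trichotomy a i with hai | rfl | hai
      · have hFpos : 1 ≤ Fval k l π i := by omega
        have hL0 : leftRun π i ≠ 0 := by
          intro h; have := hF0 h; omega
        by_cases hLi : leftRun π i = i - 1
        · have hFv := hF1 hL0 hLi
          have haL : i - leftRun π i ≤ a := by omega
          have hocc' : a ∈ occBefore π (at1 π i) := hLocc a haL (by omega)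
          refine ⟨⟨by omega, by omega⟩, Or.inr ⟨hocc', Or.inr ⟨?_, ?_⟩⟩⟩
          · intro s hs1 hs2 hs3
            exact hLocc s (by omega) (by omega)
          · exact ⟨hai, by omega, hin, hinot,
              fun s hs1 hs2 => hLocc s (by omega) (by omega)⟩
        · have hFv := hF2 hL0 hLi
          have haL : i - leftRun π i ≤ a := by omega
          have hocc' : a ∈ occBefore π (at1 π i) := hLocc a haL (by omega)
          refine ⟨⟨by omega, by omega⟩, Or.inr ⟨hocc', Or.inr ⟨?_, ?_⟩⟩⟩
          · intro s hs1 hs2 hs3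
            exact hLocc s (by omega) (by omega)
          · exact ⟨hai, by omega, hin, hinot,
              fun s hs1 hs2 => hLocc s (by omega) (by omega)⟩
      · exact ⟨⟨hi1, hin⟩, Or.inl ⟨hinot, rfl⟩⟩
      · have haR : a ≤ i + rightRun π i := by omega
        have hocc' : a ∈ occBefore π (at1 π i) := hRocc a (by omega) haR
        refine ⟨⟨by omega, ((hmem a).mp hocc').2.1⟩, Or.inr ⟨hocc', Or.inl ?_⟩⟩
        exact ⟨hi1, hai, by omega, hinot,
          fun s hs1 hs2 => hRocc s (by omega) (by omega)⟩
  have hset : (Finset.Icc 1 n).filter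
      (fun a => pullTry k l n (occBefore π (at1 π i)) a = some i)
      = Finset.Icc (i - Fval k l π i) (i + Bval k π i) := by
    ext a
    rw [Finset.mem_filter, key a, Finset.mem_Icc]
  rw [hset, Nat.card_Icc]
  omega
end
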